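/- Let F be a field of characteristic different from 2 and let G be a finite group whose order is invertible in F. Let V₁ and V₂ be finite-dimensional F-vector spaces with non-degenerate quadratic forms, each equipped with an action of G by isometries. Suppose given orthogonal direct sum decompositions V₁ = U₁ ⊕ W₁ and V₂ = U₂ ⊕ W₂ into G-stable subspaces (i.e., U₁ ⊥ W₁ and U₂ ⊥ W₂, each subspace preserved by G), such that: (i) there exists a G-equivariant isometry between V₁ and V₂; (ii) W₁ is contained in the G-fixed subspace V₁^G and W₂ is contained in V₂^G; (iii) the restrictions of the quadratic forms to W₁ and W₂ are non-degenerate; and (iv) W₁ and W₂ are isometric as quadratic spaces. Then there exists a G-equivariant isometry between U₁ (with the restricted form and G-action) and U₂ (with the restricted form and G-action). -/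

import Mathlib

open QuadraticMap

section Reflections

variable {F V V' : Type*} [Field F] [AddCommGroup V] [Module F V]
  [AddCommGroup V'] [Module F V']

lemma polar_of_isometry {Q : QuadraticForm F V} {Q' : QuadraticForm F V'}
    (f : V →ₗ[F] V') (hf : ∀ v, Q' (f v) = Q v) (x y : V) :
    polar Q' (f x) (f y) = polar Q x y := by
  simp [polar, ← map_add, hf]

lemma q_add (Q : QuadraticForm F V) (x y : V) :
    Q (x + y) = Q x + Q y + polar Q x y := by
  rw [polar]; ring

lemma q_sub (Q : QuadraticForm F V) (x y : V) :
    Q (x - y) = Q x + Q y - polar Q x y := by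
  rw [sub_eq_add_neg, q_add, QuadraticMap.map_neg, polar_neg_right]; ring

lemma polar_self_eq (Q : QuadraticForm F V) (x : V) : polar Q x x = 2 * Q x := by
  rw [polar_self]; push_cast [two_smul]; ring

lemma q_smul' (Q : QuadraticForm F V) (t : F) (x : V) : Q (t • x) = t * t * Q x := by
  rw [QuadraticMap.map_smul, smul_eq_mul]

/-- Reflection in an anisotropic vector, as a linear map. -/
noncomputable def qrefl (Q : QuadraticForm F V) (v : V) : V →ₗ[F] V :=
  LinearMap.id - (Q v)⁻¹ • (Q.polarBilin v).smulRight v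

lemma qrefl_apply (Q : QuadraticForm F V) (v z : V) :
    qrefl Q v z = z - ((Q v)⁻¹ * polar Q v z) • v := by
  rw [qrefl, LinearMap.sub_apply, LinearMap.smul_apply, LinearMap.smulRight_apply,
    LinearMap.id_apply, polarBilin_apply_apply, smul_smul]

lemma qrefl_involutive (Q : QuadraticForm F V) {v : V} (hv : Q v ≠ 0) :
    Function.Involutive (qrefl Q v) := by
  intro z
  rw [qrefl_apply, qrefl_apply, polar_sub_right, polar_smul_right, polar_self_eq,
    smul_eq_mul]
  have h2 : (Q v)⁻¹ * (polar Q v z - (Q v)⁻¹ * polar Q v z * (2 * Q v))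
      = -((Q v)⁻¹ * polar Q v z) := by
    field_simp; ring
  rw [h2]
  module

lemma qrefl_isometry (Q : QuadraticForm F V) {v : V} (hv : Q v ≠ 0) (z : V) :
    Q (qrefl Q v z) = Q z := by
  rw [qrefl_apply, q_sub, q_smul', polar_smul_right, polar_comm Q z v, smul_eq_mul]
  field_simp
  ring

lemma qrefl_fix (Q : QuadraticForm F V) (v : V) {z : V} (hz : polar Q v z = 0) :
    qrefl Q v z = z := by
  rw [qrefl_apply, hz]; simp

lemma qrefl_map_self (Q : QuadraticForm F V) {v : V} (hv : Q v ≠ 0) :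
    qrefl Q v v = -v := by
  rw [qrefl_apply, polar_self_eq]
  have h : (Q v)⁻¹ * (2 * Q v) = 2 := by field_simp
  rw [h]
  module

/-- Key lemma: if `Q x = Q y ≠ 0` then some isometry of `V` sends `x` to `y` and fixes
everything orthogonal to both `x` and `y`. -/
lemma exists_isometry_map_eq (Q : QuadraticForm F V) (hchar : ringChar F ≠ 2)
    {x y : V} (hxy : Q x = Q y) (hx : Q x ≠ 0) :
    ∃ σ : V →ₗ[F] V, (∀ z, Q (σ z) = Q z) ∧ Function.Bijective σ ∧ σ x = y ∧
      ∀ z, polar Q x z = 0 → polar Q y z = 0 → σ z = z := by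
  have h2 : (2 : F) ≠ 0 := Ring.two_ne_zero hchar
  have hsum : Q (x - y) + Q (x + y) = 2 * (2 * Q x) := by
    rw [q_add, q_sub, ← hxy]; ring
  have hne : Q (x - y) ≠ 0 ∨ Q (x + y) ≠ 0 := by
    by_contra h
    push_neg at h
    rw [h.1, h.2] at hsum
    exact hx (by field_simp at hsum; exact (mul_eq_zero.mp (by linear_combination -hsum : (2:F)^2 * Q x = 0)).resolve_left (pow_ne_zero 2 h2))
  rcases hne with hne | hne
  · refine ⟨qrefl Q (x - y), qrefl_isometry Q hne, (qrefl_involutive Q hne).bijective, ?_, ?_⟩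
    · rw [qrefl_apply]
      have hp : polar Q (x - y) x = Q (x - y) := by
        rw [polar_sub_left, polar_self_eq, polar_comm Q y x, q_sub, ← hxy]; ring
      rw [hp, inv_mul_cancel₀ hne, one_smul, sub_sub_cancel]
    · intro z hzx hzy
      refine qrefl_fix Q _ ?_
      rw [polar_sub_left, hzx, hzy, sub_zero]
  · have hy : Q y ≠ 0 := hxy ▸ hx
    refine ⟨(qrefl Q y) ∘ₗ (qrefl Q (x + y)), ?_, ?_, ?_, ?_⟩
    · intro z
      simp [qrefl_isometry Q hne, qrefl_isometry Q hy]
    · exact (qrefl_involutive Q hy).bijective.comp (qrefl_involutive Q hne).bijective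
    · have hp : polar Q (x + y) x = Q (x + y) := by
        rw [polar_add_left, polar_self_eq, polar_comm Q y x, q_add, ← hxy]; ring
      have h1 : qrefl Q (x + y) x = -y := by
        rw [qrefl_apply, hp, inv_mul_cancel₀ hne, one_smul]
        abel
      have h2' : qrefl Q y (-y) = y := by
        rw [_root_.map_neg, qrefl_map_self Q hy, neg_neg]
      simp [LinearMap.comp_apply, h1, h2']
    · intro z hzx hzy
      have h1 : qrefl Q (x + y) z = z := by
        refine qrefl_fix Q _ ?_
        rw [polar_add_left, hzx, hzy, add_zero]
      rw [LinearMap.comp_apply, h1, qrefl_fix Q y hzy]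

end Reflections

section Polar
variable {F V V' : Type*} [Field F] [AddCommGroup V] [Module F V]
  [AddCommGroup V'] [Module F V']

lemma polar_of_isometry' {Q : QuadraticForm F V} {Q' : QuadraticForm F V'}
    (f : V →ₗ[F] V') (hf : ∀ v, Q' (f v) = Q v) (x y : V) :
    polar Q' (f x) (f y) = polar Q x y := by
  simp [polar, ← map_add, hf]

lemma polar_sum_left' (Q : QuadraticForm F V) {ι : Type*} (s : Finset ι) (u : ι → V) (y : V) :
    polar Q (∑ i ∈ s, u i) y = ∑ i ∈ s, polar Q (u i) y := by
  classical
  induction s using Finset.induction_on with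
  | empty => simp [polar]
  | insert i s hni ih =>
    rw [Finset.sum_insert hni, Finset.sum_insert hni, polar_add_left, ih]

lemma polar_sum_right' (Q : QuadraticForm F V) {ι : Type*} (s : Finset ι) (u : ι → V) (y : V) :
    polar Q y (∑ i ∈ s, u i) = ∑ i ∈ s, polar Q y (u i) := by
  rw [polar_comm, polar_sum_left']
  exact Finset.sum_congr rfl fun i _ => polar_comm _ _ _

end Polar

section Master
variable {F V V' : Type*} [Field F] [AddCommGroup V] [Module F V]
  [AddCommGroup V'] [Module F V']

/-- Master lemma: an isometry can be modified so as to carry a pairwise-orthogonal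
anisotropic family to a prescribed pairwise-orthogonal family with the same values. -/
lemma exists_isometryEquiv_family (hchar : ringChar F ≠ 2)
    (Q : QuadraticForm F V) (Q' : QuadraticForm F V')
    (e : V ≃ₗ[F] V') (he : ∀ v, Q' (e v) = Q v) :
    ∀ {k : ℕ} (w : Fin k → V) (w' : Fin k → V'),
    (∀ i, Q' (w' i) = Q (w i)) → (∀ i, Q (w i) ≠ 0) →
    (∀ i j, i ≠ j → polar Q (w i) (w j) = 0) →
    (∀ i j, i ≠ j → polar Q' (w' i) (w' j) = 0) →
    ∃ φ : V ≃ₗ[F] V', (∀ v, Q' (φ v) = Q v) ∧ ∀ i, φ (w i) = w' i := by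
  intro k
  induction k with
  | zero => exact fun w w' _ _ _ _ => ⟨e, he, fun i => i.elim0⟩
  | succ n ih =>
    intro w w' hq han horth horth'
    obtain ⟨φ₀, hφ₀, hmap⟩ := ih (w ∘ Fin.castSucc) (w' ∘ Fin.castSucc)
      (fun i => hq _) (fun i => han _)
      (fun i j hij => horth _ _ (fun h => hij (Fin.castSucc_injective _ h)))
      (fun i j hij => horth' _ _ (fun h => hij (Fin.castSucc_injective _ h)))
    set x := φ₀ (w (Fin.last n)) with hxdef
    set y := w' (Fin.last n) with hydef
    have hxy : Q' x = Q' y := by rw [hφ₀, hq]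
    have hx : Q' x ≠ 0 := by rw [hφ₀]; exact han _
    obtain ⟨σ, hσiso, hσbij, hσx, hσfix⟩ := exists_isometry_map_eq Q' hchar hxy hx
    refine ⟨φ₀.trans (LinearEquiv.ofBijective σ hσbij), fun v => by
      simp [LinearEquiv.trans_apply, LinearEquiv.ofBijective_apply, hσiso, hφ₀], ?_⟩
    intro i
    induction i using Fin.lastCases with
    | last =>
      simpa [LinearEquiv.trans_apply, LinearEquiv.ofBijective_apply] using hσx
    | cast j =>
      have hmap' : ∀ i : Fin n, φ₀ (w i.castSucc) = w' i.castSucc := fun i => hmap i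
      have hpe : ∀ a b : V, polar Q' (φ₀ a) (φ₀ b) = polar Q a b := fun a b => by
        simp [polar, ← map_add, hφ₀]
      have h1 : polar Q' x (w' j.castSucc) = 0 := by
        rw [hxdef, ← hmap' j, hpe]
        exact horth _ _ (Fin.castSucc_lt_last j).ne'
      have h2 : polar Q' y (w' j.castSucc) = 0 :=
        horth' _ _ (Fin.castSucc_lt_last j).ne'
      simp only [LinearEquiv.trans_apply, LinearEquiv.ofBijective_apply]
      rw [show φ₀ (w j.castSucc) = w' j.castSucc from hmap' j]
      exact hσfix _ h1 h2

/-- Cancellation core: given an isometry `e : V ≃ V'`, a subspace `T` on which the form is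
non-degenerate, and an isometric embedding of `T` with range `T'`, there is a global isometry
carrying `T` onto `T'`. -/
lemma exists_global_isometry_map (hchar : ringChar F ≠ 2) [FiniteDimensional F V]
    (Q : QuadraticForm F V) (Q' : QuadraticForm F V')
    (e : V ≃ₗ[F] V') (he : ∀ v, Q' (e v) = Q v)
    (T : Submodule F V) (T' : Submodule F V')
    (gm : T →ₗ[F] V') (hg : ∀ t : T, Q' (gm t) = Q (t : V))
    (hgrange : LinearMap.range gm = T')
    (hTnd : ∀ x ∈ T, (∀ y ∈ T, polar Q x y = 0) → x = 0) :
    ∃ Φ : V ≃ₗ[F] V', (∀ v, Q' (Φ v) = Q v) ∧ Submodule.map (Φ : V →ₗ[F] V') T = T' := by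
  haveI : Invertible (2 : F) := invertibleOfNonzero (Ring.two_ne_zero hchar)
  set QT : QuadraticForm F T := Q.comp T.subtype with hQT
  have hQTapp : ∀ t : T, QT t = Q (t : V) := fun t => rfl
  have hpolarT : ∀ s t : T, polar QT s t = polar Q (s : V) (t : V) := by
    intro s t; simp [polar, hQTapp]
  have hsymm : QT.polarBilin.IsSymm := by
    rw [LinearMap.isSymm_def]
    intro s t
    simp only [polarBilin_apply_apply, RingHom.id_apply]
    exact polar_comm _ _ _
  obtain ⟨b, hb⟩ := LinearMap.BilinForm.exists_orthogonal_basis hsymm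
  have hb' : ∀ i j, i ≠ j → polar QT (b i) (b j) = 0 := fun i j hij => by
    simpa [polarBilin_apply_apply] using LinearMap.isOrthoᵢ_def.mp hb i j hij
  have han : ∀ i, Q ((b i : V)) ≠ 0 := by
    intro i hzero
    have hdiag : ∀ j, QT.polarBilin (b i) (b j) = 0 := by
      intro j
      rcases eq_or_ne i j with rfl | hij
      · rw [polarBilin_apply_apply, hpolarT]
        rw [polar_self_eq, hzero, mul_zero]
      · rw [polarBilin_apply_apply]; exact hb' i j hij
    have hall : ∀ y ∈ T, polar Q ((b i : V)) y = 0 := by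
      intro y hy
      have : QT.polarBilin (b i) = 0 := b.ext fun j => hdiag j
      have h2 := congrFun (congrArg DFunLike.coe this) ⟨y, hy⟩
      simpa [polarBilin_apply_apply, hpolarT] using h2
    have := hTnd (b i : V) (b i).2 hall
    exact b.ne_zero i (Subtype.ext this)
  obtain ⟨Φ, hΦiso, hΦmap⟩ := exists_isometryEquiv_family hchar Q Q' e he
    (fun i => (b i : V)) (fun i => gm (b i))
    (fun i => hg (b i)) han
    (fun i j hij => by rw [← hpolarT]; exact hb' i j hij)
    (fun i j hij => by
      rw [polar_of_isometry' (Q := QT) gm hg]; exact hb' i j hij)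
  refine ⟨Φ, hΦiso, ?_⟩
  have hT : T = Submodule.span F (Set.range fun i => (b i : V)) := by
    conv_lhs => rw [← Submodule.map_subtype_top T]
    rw [← b.span_eq, Submodule.map_span, ← Set.range_comp]
    rfl
  have hT' : T' = Submodule.span F (Set.range fun i => gm (b i)) := by
    rw [← hgrange, ← Submodule.map_top, ← b.span_eq, Submodule.map_span, ← Set.range_comp]
    rfl
  rw [hT, hT', Submodule.map_span, ← Set.range_comp]
  congr 1
  ext v
  constructor
  · rintro ⟨i, rfl⟩; exact ⟨i, (hΦmap i).symm⟩
  · rintro ⟨i, rfl⟩; exact ⟨i, hΦmap i⟩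

end Master

section Avg
variable {F G V : Type*} [Field F] [Group G] [Fintype G] [AddCommGroup V] [Module F V]

/-- The averaging (Reynolds) operator of a representation. -/
noncomputable def avgMap (ρ : Representation F G V) : V →ₗ[F] V :=
  (Fintype.card G : F)⁻¹ • ∑ g : G, ρ g

lemma avgMap_apply (ρ : Representation F G V) (v : V) :
    avgMap ρ v = (Fintype.card G : F)⁻¹ • ∑ g : G, ρ g v := by
  simp [avgMap, LinearMap.sum_apply]

lemma rho_avg (ρ : Representation F G V) (g : G) (v : V) :
    ρ g (avgMap ρ v) = avgMap ρ v := by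
  rw [avgMap_apply, _root_.map_smul, map_sum]
  congr 1
  refine Fintype.sum_equiv (Equiv.mulLeft g) _ _ fun h => ?_
  rw [Equiv.coe_mulLeft, map_mul, Module.End.mul_apply]

lemma avg_rho (ρ : Representation F G V) (g : G) (v : V) :
    avgMap ρ (ρ g v) = avgMap ρ v := by
  rw [avgMap_apply, avgMap_apply]
  congr 1
  refine Fintype.sum_equiv (Equiv.mulRight g) _ _ fun h => ?_
  rw [Equiv.coe_mulRight, map_mul, Module.End.mul_apply]

lemma avg_fixed (hcard : (Fintype.card G : F) ≠ 0) (ρ : Representation F G V)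
    {v : V} (h : ∀ g, ρ g v = v) : avgMap ρ v = v := by
  rw [avgMap_apply]
  simp only [h, Finset.sum_const, Finset.card_univ]
  rw [← Nat.cast_smul_eq_nsmul F, smul_smul, inv_mul_cancel₀ hcard, one_smul]

lemma avg_idem (hcard : (Fintype.card G : F) ≠ 0) (ρ : Representation F G V) (v : V) :
    avgMap ρ (avgMap ρ v) = avgMap ρ v :=
  avg_fixed hcard ρ fun g => rho_avg ρ g v

lemma avg_adj (hcard : (Fintype.card G : F) ≠ 0) (ρ : Representation F G V)
    (Q : QuadraticForm F V) (hisom : ∀ (g : G) (v : V), Q (ρ g v) = Q v) (x y : V) :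
    polar Q (avgMap ρ x) y = polar Q x (avgMap ρ y) := by
  have hpol : ∀ (g : G) (a b : V), polar Q (ρ g a) (ρ g b) = polar Q a b := fun g a b =>
    polar_of_isometry' (ρ g) (hisom g) a b
  have hkey : ∀ (g : G) (a b : V), polar Q (ρ g a) b = polar Q a (ρ g⁻¹ b) := by
    intro g a b
    have h1 : ρ g (ρ g⁻¹ b) = b := by
      rw [← Module.End.mul_apply, ← map_mul, mul_inv_cancel, map_one, Module.End.one_apply]
    conv_lhs => rw [← h1]
    exact hpol g a (ρ g⁻¹ b)
  rw [avgMap_apply, avgMap_apply, polar_smul_left, polar_smul_right,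
    polar_sum_left' Q Finset.univ (fun g => ρ g x) y,
    polar_sum_right' Q Finset.univ (fun g => ρ g y) x]
  congr 1
  refine Fintype.sum_equiv (Equiv.inv G) _ _ fun g => ?_
  rw [hkey g x y, Equiv.inv_apply]

end Avg

section Perp
variable {F V : Type*} [Field F] [AddCommGroup V] [Module F V]

/-- The orthogonal complement of a submodule w.r.t. the polar form of `Q`. -/
def perpSub (Q : QuadraticForm F V) (T : Submodule F V) : Submodule F V where
  carrier := {x | ∀ t ∈ T, polar Q x t = 0}
  add_mem' := fun ha hb t ht => by rw [polar_add_left, ha t ht, hb t ht, add_zero]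
  zero_mem' := fun t ht => by simp [polar]
  smul_mem' := fun c x hx t ht => by rw [polar_smul_left, hx t ht, smul_zero]

lemma mem_perpSub {Q : QuadraticForm F V} {T : Submodule F V} {x : V} :
    x ∈ perpSub Q T ↔ ∀ t ∈ T, polar Q x t = 0 := Iff.rfl

end Perp




/-- **Equivariant Witt cancellation (Theorem A.2).** Let `F` be a field of characteristic `≠ 2`
and `G` a finite group with `|G|` invertible in `F`. Let `V₁, V₂` be finite-dimensional
non-degenerate quadratic spaces over `F` with `G` acting by isometries. Given `G`-stable
orthogonal decompositions `V₁ = U₁ ⊥ W₁` and `V₂ = U₂ ⊥ W₂` such that (i) `V₁` and `V₂` are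
`G`-equivariantly isometric, (ii) `W₁ ⊆ V₁^G`, `W₂ ⊆ V₂^G`, (iii) the forms restricted to
`W₁, W₂` are non-degenerate, and (iv) `W₁` and `W₂` are isometric, then `U₁` and `U₂` are
`G`-equivariantly isometric. -/
theorem equivariant_witt_cancellation
    {F G : Type*} [Field F] [Group G] [Fintype G]
    (hchar : ringChar F ≠ 2)
    (hcard : (Fintype.card G : F) ≠ 0)
    {V₁ V₂ : Type*} [AddCommGroup V₁] [Module F V₁] [FiniteDimensional F V₁]
    [AddCommGroup V₂] [Module F V₂] [FiniteDimensional F V₂]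
    (Q₁ : QuadraticForm F V₁) (Q₂ : QuadraticForm F V₂)
    (hnd₁ : ∀ x : V₁, (∀ y : V₁, Q₁.polarBilin x y = 0) → x = 0)
    (hnd₂ : ∀ x : V₂, (∀ y : V₂, Q₂.polarBilin x y = 0) → x = 0)
    (ρ₁ : Representation F G V₁) (ρ₂ : Representation F G V₂)
    (hisom₁ : ∀ (g : G) (v : V₁), Q₁ (ρ₁ g v) = Q₁ v)
    (hisom₂ : ∀ (g : G) (v : V₂), Q₂ (ρ₂ g v) = Q₂ v)
    (U₁ W₁ : Submodule F V₁) (U₂ W₂ : Submodule F V₂)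
    -- internal direct sum decompositions
    (hinf₁ : U₁ ⊓ W₁ = ⊥) (hsup₁ : U₁ ⊔ W₁ = ⊤)
    (hinf₂ : U₂ ⊓ W₂ = ⊥) (hsup₂ : U₂ ⊔ W₂ = ⊤)
    -- orthogonality of the decompositions
    (horth₁ : ∀ u ∈ U₁, ∀ w ∈ W₁, Q₁.polarBilin u w = 0)
    (horth₂ : ∀ u ∈ U₂, ∀ w ∈ W₂, Q₂.polarBilin u w = 0)
    -- the subspaces are preserved by G
    (hU₁ : ∀ (g : G), ∀ v ∈ U₁, ρ₁ g v ∈ U₁) (hW₁ : ∀ (g : G), ∀ v ∈ W₁, ρ₁ g v ∈ W₁)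
    (hU₂ : ∀ (g : G), ∀ v ∈ U₂, ρ₂ g v ∈ U₂) (hW₂ : ∀ (g : G), ∀ v ∈ W₂, ρ₂ g v ∈ W₂)
    -- (i) a G-equivariant isometry between V₁ and V₂
    (hVisom : ∃ e : V₁ ≃ₗ[F] V₂,
      (∀ v : V₁, Q₂ (e v) = Q₁ v) ∧ (∀ (g : G) (v : V₁), e (ρ₁ g v) = ρ₂ g (e v)))
    -- (ii) W₁ ⊆ V₁^G and W₂ ⊆ V₂^G
    (hWfix₁ : ∀ w ∈ W₁, ∀ g : G, ρ₁ g w = w)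
    (hWfix₂ : ∀ w ∈ W₂, ∀ g : G, ρ₂ g w = w)
    -- (iii) the restrictions of the forms to W₁ and W₂ are non-degenerate
    (hWnd₁ : ∀ x ∈ W₁, (∀ y ∈ W₁, Q₁.polarBilin x y = 0) → x = 0)
    (hWnd₂ : ∀ x ∈ W₂, (∀ y ∈ W₂, Q₂.polarBilin x y = 0) → x = 0)
    -- (iv) W₁ and W₂ are isometric
    (hWisom : ∃ f : W₁ ≃ₗ[F] W₂, ∀ w : W₁, Q₂ (f w : V₂) = Q₁ (w : V₁)) :
    -- conclusion: U₁ and U₂ are G-equivariantly isometric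
    ∃ φ : U₁ ≃ₗ[F] U₂,
      (∀ u : U₁, Q₂ (φ u : V₂) = Q₁ (u : V₁)) ∧
      (∀ (g : G) (u : U₁), (φ ⟨ρ₁ g (u : V₁), hU₁ g u u.2⟩ : V₂) = ρ₂ g (φ u : V₂)) := by
  
  classical
  obtain ⟨e, heq, heg⟩ := hVisom
  obtain ⟨f, hf⟩ := hWisom
  -- translate polarBilin hypotheses into `polar` form
  have hnd₁' : ∀ x : V₁, (∀ y : V₁, polar Q₁ x y = 0) → x = 0 := fun x h =>
    hnd₁ x fun y => by rw [polarBilin_apply_apply]; exact h y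
  have hnd₂' : ∀ x : V₂, (∀ y : V₂, polar Q₂ x y = 0) → x = 0 := fun x h =>
    hnd₂ x fun y => by rw [polarBilin_apply_apply]; exact h y
  have horth₁' : ∀ u ∈ U₁, ∀ w ∈ W₁, polar Q₁ u w = 0 := fun u hu w hw => by
    rw [← polarBilin_apply_apply]; exact horth₁ u hu w hw
  have horth₂' : ∀ u ∈ U₂, ∀ w ∈ W₂, polar Q₂ u w = 0 := fun u hu w hw => by
    rw [← polarBilin_apply_apply]; exact horth₂ u hu w hw
  have hWnd₁' : ∀ x ∈ W₁, (∀ y ∈ W₁, polar Q₁ x y = 0) → x = 0 := fun x hx h =>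
    hWnd₁ x hx fun y hy => by rw [polarBilin_apply_apply]; exact h y hy
  -- averaging operators and their properties
  have heπ : ∀ v, e (avgMap ρ₁ v) = avgMap ρ₂ (e v) := by
    intro v
    rw [avgMap_apply, avgMap_apply, _root_.map_smul, map_sum]
    congr 1
    exact Finset.sum_congr rfl fun g _ => heg g v
  have hadj₁ : ∀ x y, polar Q₁ (avgMap ρ₁ x) y = polar Q₁ x (avgMap ρ₁ y) :=
    avg_adj hcard ρ₁ Q₁ hisom₁
  have hadj₂ : ∀ x y, polar Q₂ (avgMap ρ₂ x) y = polar Q₂ x (avgMap ρ₂ y) :=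
    avg_adj hcard ρ₂ Q₂ hisom₂
  have hU₁π : ∀ v ∈ U₁, avgMap ρ₁ v ∈ U₁ := by
    intro v hv
    rw [avgMap_apply]
    exact Submodule.smul_mem _ _ (Submodule.sum_mem _ fun g _ => hU₁ g v hv)
  have hU₂π : ∀ v ∈ U₂, avgMap ρ₂ v ∈ U₂ := by
    intro v hv
    rw [avgMap_apply]
    exact Submodule.smul_mem _ _ (Submodule.sum_mem _ fun g _ => hU₂ g v hv)
  -- the kernel of the averaging operator and the enlarged complement
  set K₁ : Submodule F V₁ := LinearMap.ker (avgMap ρ₁) with hK₁def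
  set K₂ : Submodule F V₂ := LinearMap.ker (avgMap ρ₂) with hK₂def
  set T₁ : Submodule F V₁ := W₁ ⊔ K₁ with hT₁def
  set T₂ : Submodule F V₂ := W₂ ⊔ K₂ with hT₂def
  have hK₁mem : ∀ {k : V₁}, k ∈ K₁ → avgMap ρ₁ k = 0 := fun hk => LinearMap.mem_ker.mp hk
  have hK₂mem : ∀ {k : V₂}, k ∈ K₂ → avgMap ρ₂ k = 0 := fun hk => LinearMap.mem_ker.mp hk
  have hK₁mem' : ∀ {k : V₁}, avgMap ρ₁ k = 0 → k ∈ K₁ := fun hk => LinearMap.mem_ker.mpr hk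
  have hK₂mem' : ∀ {k : V₂}, avgMap ρ₂ k = 0 → k ∈ K₂ := fun hk => LinearMap.mem_ker.mpr hk
  have hW₁T : W₁ ≤ T₁ := le_sup_left
  have hW₂T : W₂ ≤ T₂ := le_sup_left
  have hK₁T : K₁ ≤ T₁ := le_sup_right
  have hK₂T : K₂ ≤ T₂ := le_sup_right
  have hT₁mem : ∀ t ∈ T₁, ∃ w ∈ W₁, ∃ k ∈ K₁, t = w + k := by
    intro t ht
    obtain ⟨w, hw, k, hk, h⟩ := Submodule.mem_sup.mp ht
    exact ⟨w, hw, k, hk, h.symm⟩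
  have hT₂mem : ∀ t ∈ T₂, ∃ w ∈ W₂, ∃ k ∈ K₂, t = w + k := by
    intro t ht
    obtain ⟨w, hw, k, hk, h⟩ := Submodule.mem_sup.mp ht
    exact ⟨w, hw, k, hk, h.symm⟩
  have hπW₁ : ∀ w ∈ W₁, avgMap ρ₁ w = w := fun w hw => avg_fixed hcard ρ₁ fun g => hWfix₁ w hw g
  have hπW₂ : ∀ w ∈ W₂, avgMap ρ₂ w = w := fun w hw => avg_fixed hcard ρ₂ fun g => hWfix₂ w hw g
  have hWK₁ : ∀ w ∈ W₁, ∀ k ∈ K₁, polar Q₁ w k = 0 := by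
    intro w hw k hk
    rw [← hπW₁ w hw, hadj₁, hK₁mem hk]
    simp [polar]
  have hWK₂ : ∀ w ∈ W₂, ∀ k ∈ K₂, polar Q₂ w k = 0 := by
    intro w hw k hk
    rw [← hπW₂ w hw, hadj₂, hK₂mem hk]
    simp [polar]
  have hVdec₁ : ∀ v : V₁, ∃ u ∈ U₁, ∃ w ∈ W₁, v = u + w := by
    intro v
    obtain ⟨u, hu, w, hw, h⟩ := Submodule.mem_sup.mp (hsup₁ ▸ Submodule.mem_top (x := v))
    exact ⟨u, hu, w, hw, h.symm⟩
  have hVdec₂ : ∀ v : V₂, ∃ u ∈ U₂, ∃ w ∈ W₂, v = u + w := by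
    intro v
    obtain ⟨u, hu, w, hw, h⟩ := Submodule.mem_sup.mp (hsup₂ ▸ Submodule.mem_top (x := v))
    exact ⟨u, hu, w, hw, h.symm⟩
  have hK₁U : K₁ ≤ U₁ := by
    intro v hv
    obtain ⟨u, hu, w, hw, rfl⟩ := hVdec₁ v
    have h0 : avgMap ρ₁ u + w = 0 := by
      have h := hK₁mem hv
      rwa [map_add, hπW₁ w hw] at h
    have hw0 : w = 0 := by
      have hmem : w ∈ U₁ ⊓ W₁ := ⟨by
        rw [show w = -avgMap ρ₁ u by linear_combination (norm := module) h0]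
        exact Submodule.neg_mem _ (hU₁π u hu), hw⟩
      simpa [hinf₁] using hmem
    rw [hw0, add_zero]; exact hu
  have hK₂U : K₂ ≤ U₂ := by
    intro v hv
    obtain ⟨u, hu, w, hw, rfl⟩ := hVdec₂ v
    have h0 : avgMap ρ₂ u + w = 0 := by
      have h := hK₂mem hv
      rwa [map_add, hπW₂ w hw] at h
    have hw0 : w = 0 := by
      have hmem : w ∈ U₂ ⊓ W₂ := ⟨by
        rw [show w = -avgMap ρ₂ u by linear_combination (norm := module) h0]
        exact Submodule.neg_mem _ (hU₂π u hu), hw⟩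
      simpa [hinf₂] using hmem
    rw [hw0, add_zero]; exact hu
  -- orthogonal complements of the Tᵢ
  set A₁ : Submodule F V₁ := perpSub Q₁ T₁ with hA₁def
  set A₂ : Submodule F V₂ := perpSub Q₂ T₂ with hA₂def
  have hA₁mem : ∀ x : V₁, x ∈ A₁ ↔ ∀ t ∈ T₁, polar Q₁ x t = 0 := fun x => Iff.rfl
  have hA₂mem : ∀ x : V₂, x ∈ A₂ ↔ ∀ t ∈ T₂, polar Q₂ x t = 0 := fun x => Iff.rfl
  have hπA₁ : ∀ u ∈ U₁, avgMap ρ₁ u ∈ A₁ := by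
    intro u hu
    rw [hA₁mem]
    intro t ht
    obtain ⟨w, hw, k, hk, rfl⟩ := hT₁mem t ht
    rw [polar_add_right, horth₁' _ (hU₁π u hu) w hw, hadj₁, hK₁mem hk]
    simp [polar]
  have hπA₂ : ∀ u ∈ U₂, avgMap ρ₂ u ∈ A₂ := by
    intro u hu
    rw [hA₂mem]
    intro t ht
    obtain ⟨w, hw, k, hk, rfl⟩ := hT₂mem t ht
    rw [polar_add_right, horth₂' _ (hU₂π u hu) w hw, hadj₂, hK₂mem hk]
    simp [polar]
  have hA₁U : A₁ ≤ U₁ := by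
    intro x hx
    obtain ⟨u, hu, w, hw, rfl⟩ := hVdec₁ x
    have hw0 : w = 0 := by
      apply hWnd₁' w hw
      intro y hy
      have h1 : polar Q₁ (u + w) y = 0 := (hA₁mem _).mp hx y (hW₁T hy)
      rwa [polar_add_left, horth₁' u hu y hy, zero_add] at h1
    rw [hw0, add_zero]; exact hu
  have hA₂U : A₂ ≤ U₂ := by
    intro x hx
    obtain ⟨u, hu, w, hw, rfl⟩ := hVdec₂ x
    have hw0 : w = 0 := by
      apply fun h => hWnd₂ w hw h
      intro y hy
      rw [polarBilin_apply_apply]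
      have h1 : polar Q₂ (u + w) y = 0 := (hA₂mem _).mp hx y (hW₂T hy)
      rwa [polar_add_left, horth₂' u hu y hy, zero_add] at h1
    rw [hw0, add_zero]; exact hu
  have hsub₁ : ∀ v : V₁, v - avgMap ρ₁ v ∈ K₁ := by
    intro v
    exact hK₁mem' (by rw [LinearMap.map_sub, avg_idem hcard, sub_self])
  have hsub₂ : ∀ v : V₂, v - avgMap ρ₂ v ∈ K₂ := by
    intro v
    exact hK₂mem' (by rw [LinearMap.map_sub, avg_idem hcard, sub_self])
  have hVsum₁ : ∀ v : V₁, ∃ a ∈ A₁, ∃ t ∈ T₁, v = a + t := by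
    intro v
    obtain ⟨u, hu, w, hw, rfl⟩ := hVdec₁ v
    refine ⟨avgMap ρ₁ u, hπA₁ u hu, (u - avgMap ρ₁ u) + w,
      add_mem (hK₁T (hsub₁ u)) (hW₁T hw), by abel⟩
  have hVsum₂ : ∀ v : V₂, ∃ a ∈ A₂, ∃ t ∈ T₂, v = a + t := by
    intro v
    obtain ⟨u, hu, w, hw, rfl⟩ := hVdec₂ v
    refine ⟨avgMap ρ₂ u, hπA₂ u hu, (u - avgMap ρ₂ u) + w,
      add_mem (hK₂T (hsub₂ u)) (hW₂T hw), by abel⟩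
  have hperp_all₁ : ∀ z, z ∈ A₁ → z ∈ T₁ → z = 0 := by
    intro z hzA hzT
    apply hnd₁' z
    intro y
    obtain ⟨a, ha, t, ht, rfl⟩ := hVsum₁ y
    have h1 : polar Q₁ z a = 0 := by
      rw [polar_comm]; exact (hA₁mem a).mp ha z hzT
    rw [polar_add_right, h1, (hA₁mem z).mp hzA t ht, add_zero]
  have hperp_all₂ : ∀ z, z ∈ A₂ → z ∈ T₂ → z = 0 := by
    intro z hzA hzT
    apply hnd₂' z
    intro y
    obtain ⟨a, ha, t, ht, rfl⟩ := hVsum₂ y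
    have h1 : polar Q₂ z a = 0 := by
      rw [polar_comm]; exact (hA₂mem a).mp ha z hzT
    rw [polar_add_right, h1, (hA₂mem z).mp hzA t ht, add_zero]
  have hTnd₁ : ∀ x ∈ T₁, (∀ y ∈ T₁, polar Q₁ x y = 0) → x = 0 := by
    intro x hx hperp
    obtain ⟨w, hw, k, hk, rfl⟩ := hT₁mem x hx
    have hw0 : w = 0 := by
      apply hWnd₁' w hw
      intro y hy
      have h1 : polar Q₁ (w + k) y = 0 := hperp y (hW₁T hy)
      have h2 : polar Q₁ k y = 0 := by rw [polar_comm]; exact hWK₁ y hy k hk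
      rwa [polar_add_left, h2, add_zero] at h1
    rw [hw0, zero_add]
    refine hperp_all₁ k ?_ (hK₁T hk)
    rw [hA₁mem]
    intro t ht
    have h := hperp t ht
    rwa [hw0, zero_add] at h
  -- elements of Aᵢ are fixed points
  have hπA₁self : ∀ x ∈ A₁, avgMap ρ₁ x ∈ A₁ := by
    intro x hx
    rw [hA₁mem]
    intro t ht
    obtain ⟨w, hw, k, hk, rfl⟩ := hT₁mem t ht
    have h1 : polar Q₁ (avgMap ρ₁ x) w = 0 := by
      rw [hadj₁, hπW₁ w hw]; exact (hA₁mem x).mp hx w (hW₁T hw)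
    have h2 : polar Q₁ (avgMap ρ₁ x) k = 0 := by
      rw [hadj₁, hK₁mem hk]; simp [polar]
    rw [polar_add_right, h1, h2, add_zero]
  have hπA₂self : ∀ x ∈ A₂, avgMap ρ₂ x ∈ A₂ := by
    intro x hx
    rw [hA₂mem]
    intro t ht
    obtain ⟨w, hw, k, hk, rfl⟩ := hT₂mem t ht
    have h1 : polar Q₂ (avgMap ρ₂ x) w = 0 := by
      rw [hadj₂, hπW₂ w hw]; exact (hA₂mem x).mp hx w (hW₂T hw)
    have h2 : polar Q₂ (avgMap ρ₂ x) k = 0 := by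
      rw [hadj₂, hK₂mem hk]; simp [polar]
    rw [polar_add_right, h1, h2, add_zero]
  have hA₁fixπ : ∀ x ∈ A₁, avgMap ρ₁ x = x := by
    intro x hx
    have hz : x - avgMap ρ₁ x = 0 :=
      hperp_all₁ _ (Submodule.sub_mem _ hx (hπA₁self x hx)) (hK₁T (hsub₁ x))
    linear_combination (norm := module) - hz
  have hA₂fixπ : ∀ x ∈ A₂, avgMap ρ₂ x = x := by
    intro x hx
    have hz : x - avgMap ρ₂ x = 0 :=
      hperp_all₂ _ (Submodule.sub_mem _ hx (hπA₂self x hx)) (hK₂T (hsub₂ x))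
    linear_combination (norm := module) - hz
  have hA₁fix : ∀ x ∈ A₁, ∀ g, ρ₁ g x = x := by
    intro x hx g
    conv_lhs => rw [← hA₁fixπ x hx]
    rw [rho_avg, hA₁fixπ x hx]
  have hA₂fix : ∀ x ∈ A₂, ∀ g, ρ₂ g x = x := by
    intro x hx g
    conv_lhs => rw [← hA₂fixπ x hx]
    rw [rho_avg, hA₂fixπ x hx]
  -- e maps K₁ to K₂
  have heK : ∀ k ∈ K₁, e k ∈ K₂ := by
    intro k hk
    exact hK₂mem' (by rw [← heπ, hK₁mem hk, map_zero])
  have hesymK : ∀ k ∈ K₂, e.symm k ∈ K₁ := by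
    intro k hk
    refine hK₁mem' (e.injective ?_)
    rw [heπ, e.apply_symm_apply, hK₂mem hk, map_zero]
  -- the isometric embedding of T₁ with range T₂
  have hπT₁W : ∀ t : T₁, avgMap ρ₁ (t : V₁) ∈ W₁ := by
    intro t
    obtain ⟨w, hw, k, hk, ht⟩ := hT₁mem (t : V₁) t.2
    rw [ht, map_add, hπW₁ w hw, hK₁mem hk, add_zero]
    exact hw
  let pW : T₁ →ₗ[F] W₁ :=
    LinearMap.codRestrict W₁ (avgMap ρ₁ ∘ₗ T₁.subtype) fun t => hπT₁W t
  let gmap : T₁ →ₗ[F] V₂ :=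
    W₂.subtype ∘ₗ (f : W₁ →ₗ[F] W₂) ∘ₗ pW +
      (e : V₁ →ₗ[F] V₂) ∘ₗ (T₁.subtype - avgMap ρ₁ ∘ₗ T₁.subtype)
  have gmap_apply : ∀ t : T₁,
      gmap t = (f ⟨avgMap ρ₁ (t : V₁), hπT₁W t⟩ : V₂) + e ((t : V₁) - avgMap ρ₁ (t : V₁)) :=
    fun t => rfl
  have hgiso : ∀ t : T₁, Q₂ (gmap t) = Q₁ (t : V₁) := by
    intro t
    rw [gmap_apply, q_add]
    have hk : (t : V₁) - avgMap ρ₁ (t : V₁) ∈ K₁ := hsub₁ _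
    have h1 : Q₂ ((f ⟨avgMap ρ₁ (t : V₁), hπT₁W t⟩ : W₂) : V₂) = Q₁ (avgMap ρ₁ (t : V₁)) :=
      hf _
    have h2 : Q₂ (e ((t : V₁) - avgMap ρ₁ (t : V₁))) = Q₁ ((t : V₁) - avgMap ρ₁ (t : V₁)) :=
      heq _
    have h3 : polar Q₂ ((f ⟨avgMap ρ₁ (t : V₁), hπT₁W t⟩ : W₂) : V₂)
        (e ((t : V₁) - avgMap ρ₁ (t : V₁))) = 0 :=
      hWK₂ _ (f _).2 _ (heK _ hk)
    rw [h1, h2, h3, add_zero]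
    have h4 : (t : V₁) = avgMap ρ₁ (t : V₁) + ((t : V₁) - avgMap ρ₁ (t : V₁)) := by abel
    conv_rhs => rw [h4]
    rw [q_add, hWK₁ _ (hπT₁W t) _ hk, add_zero]
  have hgrange : LinearMap.range gmap = T₂ := by
    apply le_antisymm
    · rintro _ ⟨t, rfl⟩
      rw [gmap_apply]
      exact add_mem (hW₂T (f _).2) (hK₂T (heK _ (hsub₁ _)))
    · intro t₂ ht₂
      obtain ⟨w₂, hw₂, k₂, hk₂, rfl⟩ := hT₂mem t₂ ht₂
      have hx1 : ((f.symm ⟨w₂, hw₂⟩ : W₁) : V₁) ∈ W₁ := (f.symm ⟨w₂, hw₂⟩).2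
      have hx2 : e.symm k₂ ∈ K₁ := hesymK _ hk₂
      have hxT : ((f.symm ⟨w₂, hw₂⟩ : W₁) : V₁) + e.symm k₂ ∈ T₁ :=
        add_mem (hW₁T hx1) (hK₁T hx2)
      set x : V₁ := ((f.symm ⟨w₂, hw₂⟩ : W₁) : V₁) + e.symm k₂ with hxdef
      have hxT' : x ∈ T₁ := hxT
      refine ⟨⟨x, hxT'⟩, ?_⟩
      have hπx : avgMap ρ₁ x = ((f.symm ⟨w₂, hw₂⟩ : W₁) : V₁) := by
        rw [hxdef, map_add, hπW₁ _ hx1, hK₁mem hx2, add_zero]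
      show ((f ⟨avgMap ρ₁ x, hπT₁W ⟨x, hxT'⟩⟩ : W₂) : V₂) + e (x - avgMap ρ₁ x) = w₂ + k₂
      have h1 : (⟨avgMap ρ₁ x, hπT₁W ⟨x, hxT'⟩⟩ : W₁) = f.symm ⟨w₂, hw₂⟩ := Subtype.ext hπx
      rw [h1, f.apply_symm_apply]
      have h2 : x - avgMap ρ₁ x = e.symm k₂ := by rw [hπx, hxdef]; abel
      rw [h2, e.apply_symm_apply]
  -- apply the cancellation core
  obtain ⟨Φ, hΦiso, hΦT⟩ := exists_global_isometry_map hchar Q₁ Q₂ e heq T₁ T₂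
    gmap hgiso hgrange hTnd₁
  have hΦpol : ∀ a b : V₁, polar Q₂ (Φ a) (Φ b) = polar Q₁ a b := fun a b => by
    simp [polar, ← map_add, hΦiso]
  have hΦT' : ∀ t ∈ T₁, Φ t ∈ T₂ := by
    intro t ht
    rw [← hΦT]
    exact Submodule.mem_map_of_mem ht
  have hΦA : ∀ a ∈ A₁, Φ a ∈ A₂ := by
    intro a ha
    rw [hA₂mem]
    intro t ht
    rw [← hΦT] at ht
    obtain ⟨s, hs, rfl⟩ := ht
    have : polar Q₂ (Φ a) (Φ s) = 0 := by rw [hΦpol]; exact (hA₁mem a).mp ha s hs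
    simpa using this
  have hΦ'A : ∀ a ∈ A₂, Φ.symm a ∈ A₁ := by
    intro a ha
    rw [hA₁mem]
    intro s hs
    have h1 : polar Q₁ (Φ.symm a) s = polar Q₂ (Φ (Φ.symm a)) (Φ s) := (hΦpol _ _).symm
    rw [h1, Φ.apply_symm_apply]
    exact (hA₂mem a).mp ha (Φ s) (hΦT' s hs)
  -- construct the final equivalence
  have hNmem : ∀ u : U₁,
      Φ (avgMap ρ₁ (u : V₁)) + e ((u : V₁) - avgMap ρ₁ (u : V₁)) ∈ U₂ := fun u =>
    add_mem (hA₂U (hΦA _ (hπA₁ _ u.2))) (hK₂U (heK _ (hsub₁ _)))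
  have hMmem : ∀ u : U₂,
      Φ.symm (avgMap ρ₂ (u : V₂)) + e.symm ((u : V₂) - avgMap ρ₂ (u : V₂)) ∈ U₁ := fun u =>
    add_mem (hA₁U (hΦ'A _ (hπA₂ _ u.2))) (hK₁U (hesymK _ (hsub₂ _)))
  let N : U₁ →ₗ[F] U₂ := LinearMap.codRestrict U₂
    ((Φ : V₁ →ₗ[F] V₂) ∘ₗ avgMap ρ₁ ∘ₗ U₁.subtype +
      (e : V₁ →ₗ[F] V₂) ∘ₗ (U₁.subtype - avgMap ρ₁ ∘ₗ U₁.subtype)) (fun u => hNmem u)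
  let M : U₂ →ₗ[F] U₁ := LinearMap.codRestrict U₁
    ((Φ.symm : V₂ →ₗ[F] V₁) ∘ₗ avgMap ρ₂ ∘ₗ U₂.subtype +
      (e.symm : V₂ →ₗ[F] V₁) ∘ₗ (U₂.subtype - avgMap ρ₂ ∘ₗ U₂.subtype)) (fun u => hMmem u)
  have hNapp : ∀ u : U₁,
      (N u : V₂) = Φ (avgMap ρ₁ (u : V₁)) + e ((u : V₁) - avgMap ρ₁ (u : V₁)) := fun u => rfl
  have hMapp : ∀ u : U₂,
      (M u : V₁) = Φ.symm (avgMap ρ₂ (u : V₂)) + e.symm ((u : V₂) - avgMap ρ₂ (u : V₂)) :=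
    fun u => rfl
  have hNM : ∀ u : U₂, N (M u) = u := by
    intro u
    apply Subtype.ext
    rw [hNapp, hMapp]
    have ha : Φ.symm (avgMap ρ₂ (u : V₂)) ∈ A₁ := hΦ'A _ (hπA₂ _ u.2)
    have hk : e.symm ((u : V₂) - avgMap ρ₂ (u : V₂)) ∈ K₁ := hesymK _ (hsub₂ _)
    have hπ : avgMap ρ₁ (Φ.symm (avgMap ρ₂ (u : V₂)) + e.symm ((u : V₂) - avgMap ρ₂ (u : V₂)))
        = Φ.symm (avgMap ρ₂ (u : V₂)) := by
      rw [map_add, hA₁fixπ _ ha, hK₁mem hk, add_zero]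
    rw [hπ, Φ.apply_symm_apply]
    have h2 : (Φ.symm (avgMap ρ₂ (u : V₂)) + e.symm ((u : V₂) - avgMap ρ₂ (u : V₂)))
        - Φ.symm (avgMap ρ₂ (u : V₂)) = e.symm ((u : V₂) - avgMap ρ₂ (u : V₂)) := by abel
    rw [h2, e.apply_symm_apply]
    abel
  have hMN : ∀ u : U₁, M (N u) = u := by
    intro u
    apply Subtype.ext
    rw [hMapp, hNapp]
    have ha : Φ (avgMap ρ₁ (u : V₁)) ∈ A₂ := hΦA _ (hπA₁ _ u.2)
    have hk : e ((u : V₁) - avgMap ρ₁ (u : V₁)) ∈ K₂ := heK _ (hsub₁ _)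
    have hπ : avgMap ρ₂ (Φ (avgMap ρ₁ (u : V₁)) + e ((u : V₁) - avgMap ρ₁ (u : V₁)))
        = Φ (avgMap ρ₁ (u : V₁)) := by
      rw [map_add, hA₂fixπ _ ha, hK₂mem hk, add_zero]
    rw [hπ, Φ.symm_apply_apply]
    have h2 : (Φ (avgMap ρ₁ (u : V₁)) + e ((u : V₁) - avgMap ρ₁ (u : V₁)))
        - Φ (avgMap ρ₁ (u : V₁)) = e ((u : V₁) - avgMap ρ₁ (u : V₁)) := by abel
    rw [h2, e.symm_apply_apply]
    abel
  let φ : U₁ ≃ₗ[F] U₂ := LinearEquiv.ofLinear N M (LinearMap.ext hNM) (LinearMap.ext hMN)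
  refine ⟨φ, ?_, ?_⟩
  · intro u
    have happ : ((φ u : U₂) : V₂)
        = Φ (avgMap ρ₁ (u : V₁)) + e ((u : V₁) - avgMap ρ₁ (u : V₁)) := hNapp u
    rw [happ, q_add]
    have ha : Φ (avgMap ρ₁ (u : V₁)) ∈ A₂ := hΦA _ (hπA₁ _ u.2)
    have hk : (u : V₁) - avgMap ρ₁ (u : V₁) ∈ K₁ := hsub₁ _
    have h3 : polar Q₂ (Φ (avgMap ρ₁ (u : V₁))) (e ((u : V₁) - avgMap ρ₁ (u : V₁))) = 0 :=
      (hA₂mem _).mp ha _ (hK₂T (heK _ hk))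
    rw [hΦiso, heq, h3, add_zero]
    have h4 : (u : V₁) = avgMap ρ₁ (u : V₁) + ((u : V₁) - avgMap ρ₁ (u : V₁)) := by abel
    conv_rhs => rw [h4]
    rw [q_add]
    have h5 : polar Q₁ (avgMap ρ₁ (u : V₁)) ((u : V₁) - avgMap ρ₁ (u : V₁)) = 0 :=
      (hA₁mem _).mp (hπA₁ _ u.2) _ (hK₁T hk)
    rw [h5, add_zero]
  · intro g u
    have happ1 : ((φ (⟨ρ₁ g (u : V₁), hU₁ g u u.2⟩ : U₁) : U₂) : V₂)
        = Φ (avgMap ρ₁ (ρ₁ g (u : V₁))) + e (ρ₁ g (u : V₁) - avgMap ρ₁ (ρ₁ g (u : V₁))) :=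
      hNapp _
    have happ2 : ((φ u : U₂) : V₂)
        = Φ (avgMap ρ₁ (u : V₁)) + e ((u : V₁) - avgMap ρ₁ (u : V₁)) := hNapp u
    rw [happ1, happ2]
    have ha : Φ (avgMap ρ₁ (u : V₁)) ∈ A₂ := hΦA _ (hπA₁ _ u.2)
    rw [avg_rho]
    have h1 : ρ₁ g (u : V₁) - avgMap ρ₁ (u : V₁) = ρ₁ g ((u : V₁) - avgMap ρ₁ (u : V₁)) := by
      rw [LinearMap.map_sub, rho_avg]
    rw [h1, heg, map_add, hA₂fix _ ha g]
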